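/- (Arcsine law for 1-bit quantized jointly Gaussian variables.) Let U and V be independent real standard normal random variables, let r ∈ ℝ with |r| ≤ 1, and set X = U and Y = rU + √(1 − r²) V. Then E[sgn(X) · sgn(Y)] = (2/π) arcsin(r). -/

import Mathlib

open MeasureTheory ProbabilityTheory Real Set
open scoped NNReal ENNReal



lemma msign : Measurable Real.sign := by
  unfold Real.sign
  exact Measurable.ite measurableSet_Iio measurable_const
    (Measurable.ite measurableSet_Ioi measurable_const measurable_const)

lemma sign_abs_le (x : ℝ) : |Real.sign x| ≤ 1 := by
  rcases Real.sign_apply_eq x with h | h | h <;> rw [h] <;> norm_num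

lemma sign_mul' (a b : ℝ) : Real.sign (a * b) = Real.sign a * Real.sign b := by
  rcases lt_trichotomy a 0 with ha | rfl | ha <;> rcases lt_trichotomy b 0 with hb | rfl | hb
  · rw [Real.sign_of_pos (mul_pos_of_neg_of_neg ha hb), Real.sign_of_neg ha, Real.sign_of_neg hb]; ring
  · simp
  · rw [Real.sign_of_neg (mul_neg_of_neg_of_pos ha hb), Real.sign_of_neg ha, Real.sign_of_pos hb]; ring
  · simp
  · simp
  · simp
  · rw [Real.sign_of_neg (mul_neg_of_pos_of_neg ha hb), Real.sign_of_pos ha, Real.sign_of_neg hb]; ring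
  · simp
  · rw [Real.sign_of_pos (mul_pos ha hb), Real.sign_of_pos ha, Real.sign_of_pos hb]; ring

lemma radial : ∫ x in Ioi (0:ℝ), x * rexp (-x^2/2) = 1 := by
  have hderiv : ∀ x ∈ Ioi (0:ℝ), HasDerivAt (fun y : ℝ => -rexp (-y^2/2)) (x * rexp (-x^2/2)) x := by
    intro x _
    have h1 : HasDerivAt (fun y : ℝ => -y^2/2) (-x) x := by
      have h := ((hasDerivAt_pow 2 x).div_const 2).neg
      have h2 : HasDerivAt (fun y : ℝ => -(y^2/2)) (-x) x := by
        exact h.congr_deriv (by norm_num)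
      simpa [neg_div] using h2
    have h2 := (h1.exp).neg
    exact h2.congr_deriv (by ring)
  have hcont : ContinuousWithinAt (fun y : ℝ => -rexp (-y^2/2)) (Ici 0) 0 := by
    apply Continuous.continuousWithinAt
    continuity
  have hint : IntegrableOn (fun x : ℝ => x * rexp (-x^2/2)) (Ioi 0) := by
    have h := integrableOn_rpow_mul_exp_neg_mul_sq (b := 1/2) (by norm_num) (s := 1) (by norm_num)
    apply h.congr_fun ?_ measurableSet_Ioi
    intro x _
    show x ^ (1:ℝ) * rexp (-(1/2) * x^2) = x * rexp (-x^2/2)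
    rw [Real.rpow_one]
    ring_nf
  have hlim : Filter.Tendsto (fun y : ℝ => -rexp (-y^2/2)) Filter.atTop (nhds 0) := by
    rw [show (0:ℝ) = -0 by norm_num]
    apply Filter.Tendsto.neg
    apply Real.tendsto_exp_atBot.comp
    apply Filter.Tendsto.atBot_div_const (by norm_num)
    exact Filter.tendsto_neg_atBot_iff.mpr (Filter.tendsto_pow_atTop (by norm_num))
  have := integral_Ioi_of_hasDerivAt_of_tendsto hcont hderiv hint hlim
  rw [this]; norm_num




lemma const_piece {a b c : ℝ} (hab : a ≤ b) (f : ℝ → ℝ) (hc : ∀ θ ∈ Ioo a b, f θ = c) :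
    ∫ θ in a..b, f θ = c * (b - a) := by
  rw [intervalIntegral.integral_of_le hab, integral_Ioc_eq_integral_Ioo,
    setIntegral_congr_fun measurableSet_Ioo hc, setIntegral_const, Real.volume_real_Ioo_of_le hab,
    smul_eq_mul, mul_comm]

lemma hii (α a b : ℝ) :
    IntervalIntegrable (fun θ => Real.sign (Real.cos θ) * Real.sign (Real.sin (θ + α))) volume a b := by
  rw [intervalIntegrable_iff]
  refine Integrable.mono' (g := fun _ => (1:ℝ)) (integrableOn_const measure_Ioc_lt_top.ne)
    ?_ (Filter.Eventually.of_forall fun θ => ?_)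
  · exact ((msign.comp Real.measurable_cos).mul
      (msign.comp (Real.measurable_sin.comp (measurable_id.add_const α)))).aestronglyMeasurable.restrict
  · rw [Real.norm_eq_abs, abs_mul]
    calc |Real.sign (Real.cos θ)| * |Real.sign (Real.sin (θ + α))| ≤ 1 * 1 :=
      mul_le_mul (sign_abs_le _) (sign_abs_le _) (abs_nonneg _) zero_le_one
    _ = 1 := by norm_num

lemma ang_nonneg (α : ℝ) (h0 : 0 ≤ α) (h1 : α ≤ π/2) :
    ∫ θ in (-π)..π, Real.sign (Real.cos θ) * Real.sign (Real.sin (θ + α)) = 4*α := by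
  have hπ := Real.pi_pos
  set f := fun θ => Real.sign (Real.cos θ) * Real.sign (Real.sin (θ + α)) with hf
  have e2 : (∫ θ in (-π/2)..(-α), f θ) + ∫ θ in (-α)..π, f θ = ∫ θ in (-π/2)..π, f θ :=
    intervalIntegral.integral_add_adjacent_intervals (hii α _ _) (hii α _ _)
  have e1 : (∫ θ in (-π)..(-π/2), f θ) + ∫ θ in (-π/2)..π, f θ = ∫ θ in (-π)..π, f θ :=
    intervalIntegral.integral_add_adjacent_intervals (hii α _ _) (hii α _ _)
  have e3 : (∫ θ in (-α)..(π/2), f θ) + ∫ θ in (π/2)..π, f θ = ∫ θ in (-α)..π, f θ :=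
    intervalIntegral.integral_add_adjacent_intervals (hii α _ _) (hii α _ _)
  have e4 : (∫ θ in (π/2)..(π-α), f θ) + ∫ θ in (π-α)..π, f θ = ∫ θ in (π/2)..π, f θ :=
    intervalIntegral.integral_add_adjacent_intervals (hii α _ _) (hii α _ _)
  have p1 : ∫ θ in (-π)..(-π/2), f θ = 1 * (-π/2 - (-π)) := by
    apply const_piece (by linarith)
    intro θ hθ
    have hc : Real.cos θ < 0 := by
      rw [← Real.cos_neg]
      exact Real.cos_neg_of_pi_div_two_lt_of_lt (by linarith [hθ.2]) (by linarith [hθ.1])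
    have hs : Real.sin (θ + α) < 0 :=
      Real.sin_neg_of_neg_of_neg_pi_lt (by linarith [hθ.2]) (by linarith [hθ.1])
    rw [hf]; simp only
    rw [Real.sign_of_neg hc, Real.sign_of_neg hs]; ring
  have p2 : ∫ θ in (-π/2)..(-α), f θ = (-1) * (-α - (-π/2)) := by
    apply const_piece (by linarith)
    intro θ hθ
    have hc : 0 < Real.cos θ := Real.cos_pos_of_mem_Ioo ⟨by linarith [hθ.1], by linarith [hθ.2]⟩
    have hs : Real.sin (θ + α) < 0 :=
      Real.sin_neg_of_neg_of_neg_pi_lt (by linarith [hθ.2]) (by linarith [hθ.1])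
    rw [hf]; simp only
    rw [Real.sign_of_pos hc, Real.sign_of_neg hs]; ring
  have p3 : ∫ θ in (-α)..(π/2), f θ = 1 * (π/2 - (-α)) := by
    apply const_piece (by linarith)
    intro θ hθ
    have hc : 0 < Real.cos θ := Real.cos_pos_of_mem_Ioo ⟨by linarith [hθ.1], hθ.2⟩
    have hs : 0 < Real.sin (θ + α) :=
      Real.sin_pos_of_pos_of_lt_pi (by linarith [hθ.1]) (by linarith [hθ.2])
    rw [hf]; simp only
    rw [Real.sign_of_pos hc, Real.sign_of_pos hs]; ring
  have p4 : ∫ θ in (π/2)..(π-α), f θ = (-1) * (π - α - π/2) := by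
    apply const_piece (by linarith)
    intro θ hθ
    have hc : Real.cos θ < 0 :=
      Real.cos_neg_of_pi_div_two_lt_of_lt hθ.1 (by linarith [hθ.2])
    have hs : 0 < Real.sin (θ + α) :=
      Real.sin_pos_of_pos_of_lt_pi (by linarith [hθ.1]) (by linarith [hθ.2])
    rw [hf]; simp only
    rw [Real.sign_of_neg hc, Real.sign_of_pos hs]; ring
  have p5 : ∫ θ in (π-α)..π, f θ = 1 * (π - (π - α)) := by
    apply const_piece (by linarith)
    intro θ hθ
    have hc : Real.cos θ < 0 :=
      Real.cos_neg_of_pi_div_two_lt_of_lt (by linarith [hθ.1]) (by linarith [hθ.2])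
    have hs : Real.sin (θ + α) < 0 := by
      have h' : 0 < Real.sin (θ + α - π) :=
        Real.sin_pos_of_pos_of_lt_pi (by linarith [hθ.1]) (by linarith [hθ.2])
      rw [Real.sin_sub_pi] at h'
      linarith
    rw [hf]; simp only
    rw [Real.sign_of_neg hc, Real.sign_of_neg hs]; ring
  rw [← e1, ← e2, ← e3, ← e4, p1, p2, p3, p4, p5]
  ring

lemma ang (α : ℝ) (h0 : -(π/2) ≤ α) (h1 : α ≤ π/2) :
    ∫ θ in (-π)..π, Real.sign (Real.cos θ) * Real.sign (Real.sin (θ + α)) = 4*α := by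
  rcases le_or_gt 0 α with h | h
  · exact ang_nonneg α h h1
  · have key := ang_nonneg (-α) (by linarith) (by linarith)
    have h3 : (∫ θ in (-π)..π, (fun t => Real.sign (Real.cos t) * Real.sign (Real.sin (t + -α))) (-θ))
        = ∫ θ in (-π)..π, Real.sign (Real.cos θ) * Real.sign (Real.sin (θ + -α)) := by
      have := intervalIntegral.integral_comp_neg (a := -π) (b := π)
        (f := fun t => Real.sign (Real.cos t) * Real.sign (Real.sin (t + -α)))
      simpa using this
    have h4 : ∀ θ : ℝ, (fun t => Real.sign (Real.cos t) * Real.sign (Real.sin (t + -α))) (-θ)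
        = -(Real.sign (Real.cos θ) * Real.sign (Real.sin (θ + α))) := by
      intro θ
      simp only
      rw [Real.cos_neg, show -θ + -α = -(θ+α) by ring, Real.sin_neg, Real.sign_neg]
      ring
    have h5 : ∫ θ in (-π)..π, -(Real.sign (Real.cos θ) * Real.sign (Real.sin (θ + α))) = 4 * (-α) := by
      rw [← key, ← h3]
      apply intervalIntegral.integral_congr
      intro θ _
      exact (h4 θ).symm
    rw [intervalIntegral.integral_neg] at h5
    linarith




lemma prod_gauss : (gaussianReal 0 1).prod (gaussianReal 0 1) =
    (volume.prod volume).withDensity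
      (fun p : ℝ × ℝ => gaussianPDF 0 1 p.1 * gaussianPDF 0 1 p.2) := by
  refine Measure.prod_eq fun s t hs ht => ?_
  rw [withDensity_apply _ (hs.prod ht), ← Measure.prod_restrict,
    lintegral_prod_mul (measurable_gaussianPDF 0 1).aemeasurable
      (measurable_gaussianPDF 0 1).aemeasurable,
    ← gaussianReal_apply 0 one_ne_zero s, ← gaussianReal_apply 0 one_ne_zero t]

lemma gauss_int (F : ℝ × ℝ → ℝ) (_hF : Measurable F) :
    ∫ p, F p ∂((gaussianReal 0 1).prod (gaussianReal 0 1)) =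
      ∫ p : ℝ × ℝ, (gaussianPDFReal 0 1 p.1 * gaussianPDFReal 0 1 p.2) * F p := by
  rw [prod_gauss]
  have hd : (fun p : ℝ × ℝ => gaussianPDF 0 1 p.1 * gaussianPDF 0 1 p.2) =
      fun p : ℝ × ℝ => (((gaussianPDFReal 0 1 p.1).toNNReal * (gaussianPDFReal 0 1 p.2).toNNReal
        : ℝ≥0) : ℝ≥0∞) := by
    funext p
    simp [gaussianPDF, ENNReal.ofReal, ENNReal.coe_mul]
  have hmeas : Measurable (fun p : ℝ × ℝ =>
      ((gaussianPDFReal 0 1 p.1).toNNReal * (gaussianPDFReal 0 1 p.2).toNNReal : ℝ≥0)) :=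
    (((measurable_gaussianPDFReal 0 1).comp measurable_fst).real_toNNReal).mul
      (((measurable_gaussianPDFReal 0 1).comp measurable_snd).real_toNNReal)
  rw [hd, integral_withDensity_eq_integral_smul hmeas F]
  congr 1
  funext p
  rw [NNReal.smul_def, NNReal.coe_mul, Real.coe_toNNReal _ (gaussianPDFReal_nonneg _ _ _),
    Real.coe_toNNReal _ (gaussianPDFReal_nonneg _ _ _), smul_eq_mul]





lemma polar_step (r : ℝ) (hr : |r| ≤ 1) :
    ∫ p : ℝ × ℝ, (gaussianPDFReal 0 1 p.1 * gaussianPDFReal 0 1 p.2) *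
      (Real.sign p.1 * Real.sign (r * p.1 + Real.sqrt (1 - r^2) * p.2)) =
    (2 / π) * Real.arcsin r := by
  obtain ⟨hr1, hr2⟩ := abs_le.mp hr
  set α := Real.arcsin r with hα
  have hπ := Real.pi_pos
  have hsin : Real.sin α = r := Real.sin_arcsin hr1 hr2
  have hcos : Real.cos α = Real.sqrt (1 - r^2) := Real.cos_arcsin r
  have hα1 : -(π/2) ≤ α := Real.neg_pi_div_two_le_arcsin r
  have hα2 : α ≤ π/2 := Real.arcsin_le_pi_div_two r
  have hgdef : ∀ x : ℝ, gaussianPDFReal 0 1 x = (Real.sqrt (2*π))⁻¹ * rexp (-x^2/2) := by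
    intro x
    simp [gaussianPDFReal]
  rw [← integral_comp_polarCoord_symm
    (fun p : ℝ × ℝ => (gaussianPDFReal 0 1 p.1 * gaussianPDFReal 0 1 p.2) *
      (Real.sign p.1 * Real.sign (r * p.1 + Real.sqrt (1 - r^2) * p.2)))]
  have hset : (polarCoord.target : Set (ℝ × ℝ)) = Ioi (0:ℝ) ×ˢ Ioo (-π) π := rfl
  have hcong : ∀ p ∈ (Ioi (0:ℝ) ×ˢ Ioo (-π) π : Set (ℝ × ℝ)),
      p.1 • ((fun p : ℝ × ℝ => (gaussianPDFReal 0 1 p.1 * gaussianPDFReal 0 1 p.2) *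
        (Real.sign p.1 * Real.sign (r * p.1 + Real.sqrt (1 - r^2) * p.2))) (polarCoord.symm p))
      = (p.1 * rexp (-p.1^2/2)) *
          ((2*π)⁻¹ * (Real.sign (Real.cos p.2) * Real.sign (Real.sin (p.2 + α)))) := by
    rintro ⟨ρ, θ⟩ ⟨hρ, hθ⟩
    simp only [mem_Ioi] at hρ
    have hsymm : polarCoord.symm (ρ, θ) = (ρ * Real.cos θ, ρ * Real.sin θ) := rfl
    rw [hsymm]
    simp only
    have hg : gaussianPDFReal 0 1 (ρ * Real.cos θ) * gaussianPDFReal 0 1 (ρ * Real.sin θ)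
        = (2*π)⁻¹ * rexp (-ρ^2/2) := by
      rw [hgdef, hgdef]
      have h2 : -(ρ*Real.cos θ)^2/2 + -(ρ*Real.sin θ)^2/2 = -ρ^2/2 := by
        have h := Real.sin_sq_add_cos_sq θ
        nlinarith [h]
      calc (Real.sqrt (2*π))⁻¹ * rexp (-(ρ*Real.cos θ)^2/2) *
            ((Real.sqrt (2*π))⁻¹ * rexp (-(ρ*Real.sin θ)^2/2))
          = (Real.sqrt (2*π))⁻¹ * (Real.sqrt (2*π))⁻¹ *
            rexp (-(ρ*Real.cos θ)^2/2 + -(ρ*Real.sin θ)^2/2) := by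
            rw [Real.exp_add]; ring
        _ = (2*π)⁻¹ * rexp (-ρ^2/2) := by
            rw [h2, ← mul_inv, Real.mul_self_sqrt (by positivity)]
    have hs1 : Real.sign (ρ * Real.cos θ) = Real.sign (Real.cos θ) := by
      rw [sign_mul', Real.sign_of_pos hρ, one_mul]
    have harg : r * (ρ * Real.cos θ) + Real.sqrt (1-r^2) * (ρ * Real.sin θ)
        = ρ * Real.sin (θ + α) := by
      rw [Real.sin_add, hsin, hcos]; ring
    have hs2 : Real.sign (r * (ρ * Real.cos θ) + Real.sqrt (1-r^2) * (ρ * Real.sin θ))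
        = Real.sign (Real.sin (θ + α)) := by
      rw [harg, sign_mul', Real.sign_of_pos hρ, one_mul]
    rw [hg, hs1, hs2, smul_eq_mul]
    ring
  rw [hset, setIntegral_congr_fun (measurableSet_Ioi.prod measurableSet_Ioo) hcong,
    Measure.volume_eq_prod]
  have hsp := setIntegral_prod_mul (μ := (volume : Measure ℝ)) (ν := (volume : Measure ℝ))
    (fun a : ℝ => a * rexp (-a^2/2))
    (fun θ : ℝ => (2*π)⁻¹ * (Real.sign (Real.cos θ) * Real.sign (Real.sin (θ + α))))
    (Ioi 0) (Ioo (-π) π)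
  beta_reduce at hsp
  rw [hsp, radial]
  have hang : ∫ θ in Ioo (-π) π,
      (2*π)⁻¹ * (Real.sign (Real.cos θ) * Real.sign (Real.sin (θ + α)))
      = (2*π)⁻¹ * (4*α) := by
    rw [integral_const_mul]
    congr 1
    rw [← integral_Ioc_eq_integral_Ioo, ← intervalIntegral.integral_of_le (by linarith : -π ≤ π)]
    exact ang α hα1 hα2
  rw [hang]
  field_simp
  ring

/-- **Arcsine law for 1-bit quantized jointly Gaussian variables.**
Let `U` and `V` be independent real standard normal random variables, let `r ∈ ℝ` with
`|r| ≤ 1`, and set `X = U` and `Y = r • U + √(1 − r²) • V`.  Then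
`E[sgn X · sgn Y] = (2/π) arcsin r`. -/
theorem arcsine_law_sign_sign
    {Ω : Type*} [MeasurableSpace Ω] (μ : Measure Ω) [IsProbabilityMeasure μ]
    (U V : Ω → ℝ) (hU : Measurable U) (hV : Measurable V)
    (hUV : IndepFun U V μ)
    (hUgauss : Measure.map U μ = gaussianReal 0 1)
    (hVgauss : Measure.map V μ = gaussianReal 0 1)
    (r : ℝ) (hr : |r| ≤ 1) :
    ∫ ω, Real.sign (U ω) *
        Real.sign (r * U ω + Real.sqrt (1 - r ^ 2) * V ω) ∂μ =
      (2 / Real.pi) * Real.arcsin r := by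
  have hFmeas : Measurable (fun p : ℝ × ℝ =>
      Real.sign p.1 * Real.sign (r * p.1 + Real.sqrt (1 - r^2) * p.2)) :=
    (msign.comp measurable_fst).mul
      (msign.comp ((measurable_fst.const_mul r).add (measurable_snd.const_mul _)))
  have hmap : μ.map (fun ω => (U ω, V ω)) = (gaussianReal 0 1).prod (gaussianReal 0 1) := by
    exact ((ProbabilityTheory.indepFun_iff_map_prod_eq_prod_map_map
      hU.aemeasurable hV.aemeasurable).mp hUV).trans (by rw [hUgauss, hVgauss])
  have h1 : ∫ ω, Real.sign (U ω) * Real.sign (r * U ω + Real.sqrt (1 - r ^ 2) * V ω) ∂μ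
      = ∫ p, (fun p : ℝ × ℝ =>
          Real.sign p.1 * Real.sign (r * p.1 + Real.sqrt (1 - r^2) * p.2)) p
        ∂((gaussianReal 0 1).prod (gaussianReal 0 1)) := by
    rw [← hmap]
    exact (integral_map (hU.prodMk hV).aemeasurable hFmeas.aestronglyMeasurable).symm
  rw [h1, gauss_int _ hFmeas]
  exact polar_step r hr
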